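/- arXiv:2510.25374 — 2 statements merged into one kernel-verified Lean document; each statement's English description precedes it below -/
import Mathlib

section
/- Let A1 and A2 be the 2×2 matrices A1 = [[1 - M1^2, -M1*M2], [ρκ²M1M2, 1 - ρκ² + ρκ²M2²]] and A2 = [[-ρu2, ρu1], [-ρu1C, -ρu2C]], where M1 = u1/c, M2 = u2/c, M² = M1² + M2², C = 1 - ρκ² + ρκ²M². Assume ρ > 0, c > 0, u1 > 0. Then λ is a root of det(A1 - λA2) = 0 if and only if λ = (1/(ρ(u1²+u2²)))·(-u2 ± u1·sqrt((1-ρκ²)(M²-1)/C)), provided C ≠ 0 and u1² + u2² ≠ 0. -/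
/-- Eigenvalues of the pencil det(A1 - λA2) = 0 for the steady MHD system
in Lagrangian coordinates. -/
theorem mhd_pencil_eigenvalues (ρ c u1 u2 κ lam : ℝ)
    (hρ : 0 < ρ) (hc : 0 < c) (hu1 : 0 < u1)
    (hu : u1 ^ 2 + u2 ^ 2 ≠ 0)
    (M1 M2 Msq C : ℝ)
    (hM1 : M1 = u1 / c) (hM2 : M2 = u2 / c)
    (hMsq : Msq = M1 ^ 2 + M2 ^ 2)
    (hC : C = 1 - ρ * κ ^ 2 + ρ * κ ^ 2 * Msq) (hC0 : C ≠ 0)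
    (hD : 0 ≤ (1 - ρ * κ ^ 2) * (Msq - 1) / C) :
    (Matrix.det
      ((!![1 - M1 ^ 2, -(M1 * M2); ρ * κ ^ 2 * M1 * M2,
            1 - ρ * κ ^ 2 + ρ * κ ^ 2 * M2 ^ 2] : Matrix (Fin 2) (Fin 2) ℝ)
        - lam • (!![-(ρ * u2), ρ * u1; -(ρ * u1 * C),
            -(ρ * u2 * C)] : Matrix (Fin 2) (Fin 2) ℝ)) = 0)
    ↔ (lam = (1 / (ρ * (u1 ^ 2 + u2 ^ 2))) *
          (-u2 + u1 * Real.sqrt ((1 - ρ * κ ^ 2) * (Msq - 1) / C))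
      ∨ lam = (1 / (ρ * (u1 ^ 2 + u2 ^ 2))) *
          (-u2 - u1 * Real.sqrt ((1 - ρ * κ ^ 2) * (Msq - 1) / C))) := by
  have hcne : c ≠ 0 := ne_of_gt hc
  have hρne : ρ ≠ 0 := ne_of_gt hρ
  set s : ℝ := Real.sqrt ((1 - ρ * κ ^ 2) * (Msq - 1) / C) with hsdef
  have hs : s * s = (1 - ρ * κ ^ 2) * (Msq - 1) / C := Real.mul_self_sqrt hD
  have hs2 : C * (s * s) = (1 - ρ * κ ^ 2) * (Msq - 1) := by
    rw [hs]; field_simp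
  set r1 : ℝ := (1 / (ρ * (u1 ^ 2 + u2 ^ 2))) * (-u2 + u1 * s) with hr1
  set r2 : ℝ := (1 / (ρ * (u1 ^ 2 + u2 ^ 2))) * (-u2 - u1 * s) with hr2
  have key : Matrix.det
      ((!![1 - M1 ^ 2, -(M1 * M2); ρ * κ ^ 2 * M1 * M2,
            1 - ρ * κ ^ 2 + ρ * κ ^ 2 * M2 ^ 2] : Matrix (Fin 2) (Fin 2) ℝ)
        - lam • (!![-(ρ * u2), ρ * u1; -(ρ * u1 * C),
            -(ρ * u2 * C)] : Matrix (Fin 2) (Fin 2) ℝ))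
      = (ρ ^ 2 * C * (u1 ^ 2 + u2 ^ 2)) * ((lam - r1) * (lam - r2)) := by
    rw [Matrix.det_fin_two]
    simp only [Matrix.sub_apply, Matrix.smul_apply, Matrix.cons_val', Matrix.cons_val_zero,
      Matrix.cons_val_one, Matrix.head_cons, Matrix.head_fin_const, Matrix.empty_val',
      Matrix.cons_val_fin_one, smul_eq_mul, Matrix.of_apply]
    subst hM1 hM2 hMsq hC
    rw [hr1, hr2]
    have hs3 : ((1 - ρ * κ ^ 2) * c ^ 2 + ρ * κ ^ 2 * (u1 ^ 2 + u2 ^ 2)) * (s * s)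
        = (1 - ρ * κ ^ 2) * (u1 ^ 2 + u2 ^ 2 - c ^ 2) := by
      have h := hs2
      field_simp at h
      linarith [h]
    field_simp
    linear_combination (u1^2*c^2) * hs3
  rw [key]
  have hA : (ρ ^ 2 * C * (u1 ^ 2 + u2 ^ 2)) ≠ 0 := by positivity
  constructor
  · intro h
    rcases mul_eq_zero.mp h with h | h
    · exact absurd h hA
    · rcases mul_eq_zero.mp h with h | h
      · exact Or.inl (by linarith [sub_eq_zero.mp h])
      · exact Or.inr (by linarith [sub_eq_zero.mp h])
  · rintro (h | h) <;> rw [h] <;> ring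
end

section
/- Suppose φ : [L0, η*] × [0,1] → ℝ is C¹ with ∂_{x1}φ = -ρ̄ū·u2 and ∂_{x2}φ = (1-M̄²)·u1 for continuous functions u1, u2 on [L0, η*]×[0,1]. If u1(L0, ·) ≡ 0, u2(L0, ·) ≡ 0, u2(y1, 0) = 0, and u2(y1, 1) = σ·ū·f'(y1) for a C¹ function f with f(L0) = 0, then for every y1 ∈ [L0, η*]: ((1-M̄²)/(ρ̄ū))·∫₀¹ u1(y1, y2) dy2 = -σ·ū·f(y1). -/
/-- Compatibility identity for the linearized supersonic solution (Lemma 3.1):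
the averaged axial velocity perturbation is determined by the wall profile. -/
theorem supersonic_compatibility (L0 ηs σ ubar ρu M : ℝ)
    (hL : L0 < ηs) (hρu : 0 < ρu)
    (φ : ℝ × ℝ → ℝ) (u1 u2 : ℝ → ℝ → ℝ) (f : ℝ → ℝ)
    (hφ : ContDiff ℝ 1 φ)
    (hu1 : Continuous fun q : ℝ × ℝ => u1 q.1 q.2)
    (hu2 : Continuous fun q : ℝ × ℝ => u2 q.1 q.2)
    (hf : ContDiff ℝ 1 f) (hf0 : f L0 = 0)
    (hφ1 : ∀ y1 ∈ Set.Icc L0 ηs, ∀ y2 ∈ Set.Icc (0:ℝ) 1,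
      deriv (fun t => φ (t, y2)) y1 = -ρu * u2 y1 y2)
    (hφ2 : ∀ y1 ∈ Set.Icc L0 ηs, ∀ y2 ∈ Set.Icc (0:ℝ) 1,
      deriv (fun t => φ (y1, t)) y2 = (1 - M ^ 2) * u1 y1 y2)
    (hent1 : ∀ y2 ∈ Set.Icc (0:ℝ) 1, u1 L0 y2 = 0)
    (hent2 : ∀ y2 ∈ Set.Icc (0:ℝ) 1, u2 L0 y2 = 0)
    (hwall0 : ∀ y1 ∈ Set.Icc L0 ηs, u2 y1 0 = 0)
    (hwall1 : ∀ y1 ∈ Set.Icc L0 ηs, u2 y1 1 = σ * ubar * deriv f y1) :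
    ∀ y1 ∈ Set.Icc L0 ηs,
      ((1 - M ^ 2) / ρu) * ∫ y2 in (0:ℝ)..1, u1 y1 y2 = -σ * ubar * f y1 := by
  have hφd : Differentiable ℝ φ := hφ.differentiable one_ne_zero
  -- Step 1: for y1 in the slab, (1-M²)∫₀¹ u1 y1 = φ(y1,1) - φ(y1,0)
  have step1 : ∀ y1 ∈ Set.Icc L0 ηs,
      (1 - M ^ 2) * ∫ y2 in (0:ℝ)..1, u1 y1 y2 = φ (y1, 1) - φ (y1, 0) := by
    intro y1 hy1
    have hderiv : ∀ t ∈ Set.uIcc (0:ℝ) 1, HasDerivAt (fun t => φ (y1, t))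
        ((1 - M ^ 2) * u1 y1 t) t := by
      intro t ht
      rw [Set.uIcc_of_le zero_le_one] at ht
      have hd : DifferentiableAt ℝ (fun t => φ (y1, t)) t :=
        (hφd (y1, t)).comp t (DifferentiableAt.prodMk (differentiableAt_const y1) differentiableAt_id)
      have := hd.hasDerivAt
      rwa [hφ2 y1 hy1 t ht] at this
    have hint : IntervalIntegrable (fun t => (1 - M ^ 2) * u1 y1 t) MeasureTheory.volume 0 1 :=
      (continuous_const.mul (hu1.comp (continuous_const.prodMk continuous_id))).intervalIntegrable _ _
    have := intervalIntegral.integral_eq_sub_of_hasDerivAt hderiv hint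
    rw [intervalIntegral.integral_const_mul] at this
    exact this
  intro y1 hy1
  -- Step 2: G(y1) - G(L0) with G t = φ(t,1) - φ(t,0)
  set G : ℝ → ℝ := fun t => φ (t, 1) - φ (t, 0) with hG
  have hsub : Set.uIcc L0 y1 ⊆ Set.Icc L0 ηs := by
    rw [Set.uIcc_of_le hy1.1]
    exact Set.Icc_subset_Icc le_rfl hy1.2
  have hGderiv : ∀ t ∈ Set.uIcc L0 y1,
      HasDerivAt G (-(ρu * σ * ubar) * deriv f t) t := by
    intro t ht
    have htI := hsub ht
    have hd1 : DifferentiableAt ℝ (fun s => φ (s, (1:ℝ))) t :=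
      (hφd (t, 1)).comp t (DifferentiableAt.prodMk differentiableAt_id (differentiableAt_const _))
    have hd0 : DifferentiableAt ℝ (fun s => φ (s, (0:ℝ))) t :=
      (hφd (t, 0)).comp t (DifferentiableAt.prodMk differentiableAt_id (differentiableAt_const _))
    have h1 := hd1.hasDerivAt
    have h0 := hd0.hasDerivAt
    rw [hφ1 t htI 1 (by constructor <;> norm_num)] at h1
    rw [hφ1 t htI 0 (by constructor <;> norm_num)] at h0
    have := h1.sub h0
    rw [hwall1 t htI, hwall0 t htI] at this
    exact this.congr_deriv (by ring)
  have hfint : IntervalIntegrable (fun t => -(ρu * σ * ubar) * deriv f t)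
      MeasureTheory.volume L0 y1 :=
    (continuous_const.mul (hf.continuous_deriv le_rfl)).intervalIntegrable _ _
  have hGeq := intervalIntegral.integral_eq_sub_of_hasDerivAt hGderiv hfint
  -- evaluate the integral of f'
  have hfder : ∀ t ∈ Set.uIcc L0 y1, HasDerivAt f (deriv f t) t := fun t _ =>
    (hf.differentiable one_ne_zero t).hasDerivAt
  have hfint2 : IntervalIntegrable (deriv f) MeasureTheory.volume L0 y1 :=
    (hf.continuous_deriv le_rfl).intervalIntegrable _ _
  have hfFTC := intervalIntegral.integral_eq_sub_of_hasDerivAt hfder hfint2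
  rw [intervalIntegral.integral_const_mul, hfFTC, hf0, sub_zero] at hGeq
  -- G L0 = 0
  have hGL0 : G L0 = 0 := by
    have h1 := (step1 L0 (Set.left_mem_Icc.mpr hL.le)).symm
    have hzero : (∫ y2 in (0:ℝ)..1, u1 L0 y2) = 0 := by
      rw [intervalIntegral.integral_congr (g := fun _ => (0:ℝ))
        (fun t ht => hent1 t (by rwa [Set.uIcc_of_le zero_le_one] at ht))]
      simp
    rw [hG]
    simpa [hzero] using h1
  have hGy1 : G y1 = -(ρu * σ * ubar) * f y1 := by
    rw [hGL0, sub_zero] at hGeq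
    linarith [hGeq]
  have h1 := step1 y1 hy1
  rw [show φ (y1, 1) - φ (y1, 0) = G y1 from rfl, hGy1] at h1
  field_simp
  linarith [h1]
end
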